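/- arXiv:1608.04633 — 3 statements merged into one kernel-verified Lean document; each statement's English description precedes it below -/
import Mathlib

section
/- Define A(μ) = A→(μ) + A↛(μ) where A→(1) = 1, A↛(1) = 2, A→(μ) = A→(μ-1) + A↛(μ-1), A↛(μ) = A→(μ) + A↛(μ-1). Then A(μ) = F(2μ+2) for all μ ≥ 1. -/
/-- with `At, An` as in the mutual recursion
(`At 1 = 1`, `An 1 = 2`, `At μ = At (μ-1) + An (μ-1)`, `An μ = At μ + An (μ-1)`),
the total `A μ = At μ + An μ` equals `F (2μ+2)` for all `μ ≥ 1`. -/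
theorem stmt1 (At An A : ℕ → ℕ)
    (hAt1 : At 1 = 1) (hAn1 : An 1 = 2)
    (hAt : ∀ μ, 2 ≤ μ → At μ = At (μ - 1) + An (μ - 1))
    (hAn : ∀ μ, 2 ≤ μ → An μ = At μ + An (μ - 1))
    (hA : ∀ μ, A μ = At μ + An μ) :
    ∀ μ, 1 ≤ μ → A μ = Nat.fib (2 * μ + 2) := by
  have key : ∀ μ, 1 ≤ μ → At μ = Nat.fib (2 * μ) ∧ An μ = Nat.fib (2 * μ + 1) := by
    intro μ hμ
    induction μ with
    | zero => omega
    | succ n ih =>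
      rcases Nat.eq_or_lt_of_le hμ with h | h
      · simp [← h, hAt1, hAn1]
        decide
      · have hn : 1 ≤ n := by omega
        obtain ⟨h1, h2⟩ := ih hn
        have h2le : 2 ≤ n + 1 := by omega
        have f1 : Nat.fib (2 * n + 2) = Nat.fib (2 * n) + Nat.fib (2 * n + 1) :=
          Nat.fib_add_two
        have f2 : Nat.fib (2 * n + 3) = Nat.fib (2 * n + 1) + Nat.fib (2 * n + 2) :=
          Nat.fib_add_two
        have eAt := hAt (n + 1) h2le
        have eAn := hAn (n + 1) h2le
        simp only [Nat.add_sub_cancel] at eAt eAn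
        have g1 : 2 * (n + 1) = 2 * n + 2 := by ring
        have g2 : 2 * (n + 1) + 1 = 2 * n + 3 := by ring
        rw [g1, show 2 * n + 2 + 1 = 2 * n + 3 from rfl]
        constructor
        · omega
        · rw [eAn]; omega
  intro μ hμ
  obtain ⟨h1, h2⟩ := key μ hμ
  have f1 : Nat.fib (2 * μ + 2) = Nat.fib (2 * μ) + Nat.fib (2 * μ + 1) :=
    Nat.fib_add_two
  rw [hA]; omega
end

section
/- Let N be a positive integer and suppose a probability distribution on (b′, α′, r) ∈ {0,1}^N × A^N × {0,1}^N (conditioned on fixed (α, f)) has the product form Pr(b′, α′, r) = 2^{-N} · ∏_{j=1}^N p_j(b′_j | b′_{<j}, α′_{≤j}) · [α′_j = G_j(α_j, f, b′_{<j} ⊕ r_{<j}, r_j)], where each p_j(·|·) is a conditional probability distribution on {0,1} and each G_j, as a function of its last argument r_j ∈ {0,1} with all other arguments fixed, takes each value at most once. Then the marginal over r satisfies Pr(b′, α′) ≤ 2^{-N} for every (b′, α′). -/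
open Finset

/-- core probability bound: suppose the joint distribution of
`(b', α', r)`, conditioned on fixed `(α, f)`, has the product form
`Pr(b', α', r) = 2^{-N} · ∏_j p_j(b'_j | b'_{<j}, α'_{≤j}) · [α'_j = G_j(α_j, f, b'_{<j} ⊕ r_{<j}, r_j)]`.
Here `q j b' α'` stands for the conditional probability `p_j(b'_j | b'_{<j}, α'_{≤j})`
(hence `q j` depends only on `b'_i` for `i ≤ j` and `α'_i` for `i ≤ j`, and is a
probability distribution in the bit `b'_j`), and `G j (α j) c r_j` stands for
`G_j(α_j, f, c_{<j}, r_j)` (with the dependence on `f` absorbed and `c = b' ⊕ r`),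
which depends only on `c_i` for `i < j` and takes each value at most once as a
function of `r_j ∈ {0,1}`.  Then the marginal over `r` satisfies
`Pr(b', α') ≤ 2^{-N}` for every `(b', α')`. -/
theorem stmt9 (N : ℕ) (hN : 0 < N) (A : Type*) [Fintype A] [DecidableEq A]
    (q : Fin N → (Fin N → ZMod 2) → (Fin N → A) → ℝ)
    (hq_nonneg : ∀ j b a, 0 ≤ q j b a)
    (hq_dep : ∀ j : Fin N, ∀ b₁ b₂ : Fin N → ZMod 2, ∀ a₁ a₂ : Fin N → A,
      (∀ i, i ≤ j → b₁ i = b₂ i) → (∀ i, i ≤ j → a₁ i = a₂ i) → q j b₁ a₁ = q j b₂ a₂)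
    (hq_prob : ∀ j : Fin N, ∀ b : Fin N → ZMod 2, ∀ a : Fin N → A,
      ∑ c : ZMod 2, q j (Function.update b j c) a = 1)
    (G : Fin N → A → (Fin N → ZMod 2) → ZMod 2 → A)
    (hG_dep : ∀ j : Fin N, ∀ αj : A, ∀ c₁ c₂ : Fin N → ZMod 2,
      (∀ i, i < j → c₁ i = c₂ i) → G j αj c₁ = G j αj c₂)
    (hG_inj : ∀ j : Fin N, ∀ αj : A, ∀ c : Fin N → ZMod 2,
      Function.Injective (G j αj c))
    (α : Fin N → A) :
    ∀ (b' : Fin N → ZMod 2) (α' : Fin N → A),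
      (∑ r : Fin N → ZMod 2, (2 : ℝ) ^ (-(N : ℤ)) *
        ∏ j : Fin N, q j b' α' *
          (if α' j = G j (α j) (fun i => b' i + r i) (r j) then 1 else 0))
        ≤ (2 : ℝ) ^ (-(N : ℤ)) := by
  intro b' α'
  have hqle : ∀ j : Fin N, q j b' α' ≤ 1 := by
    intro j
    have hs := hq_prob j b' α'
    have hle : q j b' α' ≤ ∑ c : ZMod 2, q j (Function.update b' j c) α' := by
      have := Finset.single_le_sum (f := fun c => q j (Function.update b' j c) α')
        (fun c _ => hq_nonneg _ _ _) (Finset.mem_univ (b' j))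
      simpa [Function.update_eq_self] using this
    linarith
  set Q := ∏ j, q j b' α' with hQ
  have hQ0 : 0 ≤ Q := Finset.prod_nonneg fun j _ => hq_nonneg _ _ _
  have hQ1 : Q ≤ 1 := Finset.prod_le_one (fun j _ => hq_nonneg _ _ _) (fun j _ => hqle j)
  have huniq : ∀ r₁ r₂ : Fin N → ZMod 2,
      (∀ j, α' j = G j (α j) (fun i => b' i + r₁ i) (r₁ j)) →
      (∀ j, α' j = G j (α j) (fun i => b' i + r₂ i) (r₂ j)) → r₁ = r₂ := by
    intro r₁ r₂ h1 h2
    funext j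
    have key : ∀ n : ℕ, ∀ j : Fin N, (j : ℕ) = n → r₁ j = r₂ j := by
      intro n
      induction n using Nat.strong_induction_on with
      | _ n ih =>
        intro j hj
        have hc : G j (α j) (fun i => b' i + r₁ i) = G j (α j) (fun i => b' i + r₂ i) :=
          hG_dep j (α j) _ _ (fun i hi => by
            have := ih (i : ℕ) (hj ▸ hi) i rfl
            simp [this])
        apply hG_inj j (α j) (fun i => b' i + r₂ i)
        rw [← hc, ← h1 j, h2 j, hc]
    exact key (j : ℕ) j rfl
  have hsum : ∑ r : Fin N → ZMod 2,
      ∏ j : Fin N, (if α' j = G j (α j) (fun i => b' i + r i) (r j) then (1:ℝ) else 0) ≤ 1 := by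
    have hrw : ∀ r : Fin N → ZMod 2,
        ∏ j : Fin N, (if α' j = G j (α j) (fun i => b' i + r i) (r j) then (1:ℝ) else 0) =
        if ∀ j : Fin N, α' j = G j (α j) (fun i => b' i + r i) (r j) then (1:ℝ) else 0 := by
      intro r
      rw [Finset.prod_boole]
      simp
    rw [Finset.sum_congr rfl (fun r _ => hrw r), Finset.sum_boole]
    have hcard : (Finset.univ.filter (fun r : Fin N → ZMod 2 =>
        ∀ j : Fin N, α' j = G j (α j) (fun i => b' i + r i) (r j))).card ≤ 1 := by
      apply Finset.card_le_one.2
      intro r₁ hr₁ r₂ hr₂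
      simp only [Finset.mem_filter] at hr₁ hr₂
      exact huniq r₁ r₂ hr₁.2 hr₂.2
    exact_mod_cast hcard
  have hsum0 : (0:ℝ) ≤ ∑ r : Fin N → ZMod 2,
      ∏ j : Fin N, (if α' j = G j (α j) (fun i => b' i + r i) (r j) then (1:ℝ) else 0) := by
    apply Finset.sum_nonneg
    intro r _
    exact Finset.prod_nonneg fun j _ => by positivity
  have hpow : (0:ℝ) < (2 : ℝ) ^ (-(N : ℤ)) := by positivity
  calc (∑ r : Fin N → ZMod 2, (2 : ℝ) ^ (-(N : ℤ)) *
        ∏ j : Fin N, q j b' α' *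
          (if α' j = G j (α j) (fun i => b' i + r i) (r j) then 1 else 0))
      = (2 : ℝ) ^ (-(N : ℤ)) * Q * ∑ r : Fin N → ZMod 2,
          ∏ j : Fin N, (if α' j = G j (α j) (fun i => b' i + r i) (r j) then (1:ℝ) else 0) := by
        rw [Finset.mul_sum]
        refine Finset.sum_congr rfl fun r _ => ?_
        rw [Finset.prod_mul_distrib, hQ, mul_assoc]
    _ ≤ (2 : ℝ) ^ (-(N : ℤ)) * 1 * 1 := by
        apply mul_le_mul
        · apply mul_le_mul_of_nonneg_left hQ1 hpow.le
        · exact hsum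
        · exact hsum0
        · positivity
    _ = (2 : ℝ) ^ (-(N : ℤ)) := by ring
end

section
/- Let φ = (1+√5)/2 and let G(n,n) = ∏_{μ=2}^{n} F(2μ)^2 be the flow count for the n×n cluster state. Then lim_{n→∞} log₂ G(n,n) / n² = 2 log₂ φ. -/
open Finset Filter

noncomputable def stmt16u (μ : ℕ) : ℝ :=
  Real.logb 2 (Nat.fib (2 * μ)) - (2 * μ : ℝ) * Real.logb 2 Real.goldenRatio

open goldenRatio in
lemma stmt16_ratio :
    Tendsto (fun μ : ℕ => (Nat.fib (2 * μ) : ℝ) / φ ^ (2 * μ)) atTop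
      (nhds (1 / Real.sqrt 5)) := by
  have h5 : (0:ℝ) < Real.sqrt 5 := Real.sqrt_pos.mpr (by norm_num)
  have hq : |ψ / φ| < 1 := by
    rw [abs_div, abs_of_pos Real.goldenRatio_pos, div_lt_one Real.goldenRatio_pos, abs_of_neg Real.goldenConj_neg]
    nlinarith [Real.neg_one_lt_goldenConj, Real.one_lt_goldenRatio]
  have hq2 : |(ψ / φ) ^ 2| < 1 := by
    rw [abs_pow]
    nlinarith [abs_nonneg (ψ / φ)]
  have hgeo : Tendsto (fun μ : ℕ => ((ψ / φ) ^ 2) ^ μ) atTop (nhds 0) :=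
    tendsto_pow_atTop_nhds_zero_of_abs_lt_one hq2
  have key : ∀ μ : ℕ, (Nat.fib (2 * μ) : ℝ) / φ ^ (2 * μ)
      = (1 - ((ψ / φ) ^ 2) ^ μ) / Real.sqrt 5 := by
    intro μ
    have hφpow : φ ^ (2 * μ) ≠ 0 := pow_ne_zero _ Real.goldenRatio_ne_zero
    have hpow : ((ψ / φ) ^ 2) ^ μ = ψ ^ (2 * μ) / φ ^ (2 * μ) := by
      rw [← pow_mul, div_pow]
    rw [Real.coe_fib_eq, hpow]
    field_simp
  have : Tendsto (fun μ : ℕ => (1 - ((ψ / φ) ^ 2) ^ μ) / Real.sqrt 5) atTop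
      (nhds ((1 - 0) / Real.sqrt 5)) :=
    Tendsto.div_const (Tendsto.const_sub 1 hgeo) _
  simpa [key] using this

open goldenRatio in
lemma stmt16u_tendsto :
    Tendsto stmt16u atTop (nhds (Real.logb 2 (1 / Real.sqrt 5))) := by
  have h5 : (0:ℝ) < Real.sqrt 5 := Real.sqrt_pos.mpr (by norm_num)
  have hne : (1 : ℝ) / Real.sqrt 5 ≠ 0 := by positivity
  have hcont : ContinuousAt (Real.logb 2) (1 / Real.sqrt 5) :=
    Real.continuousAt_logb hne
  have h1 : Tendsto (fun μ : ℕ => Real.logb 2 ((Nat.fib (2 * μ) : ℝ) / φ ^ (2 * μ)))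
      atTop (nhds (Real.logb 2 (1 / Real.sqrt 5))) :=
    (hcont.tendsto).comp stmt16_ratio
  refine h1.congr' ?_
  filter_upwards [eventually_ge_atTop 1] with μ hμ
  have hfib : (Nat.fib (2 * μ) : ℝ) ≠ 0 := by
    have : 0 < Nat.fib (2 * μ) := Nat.fib_pos.mpr (by omega)
    exact_mod_cast this.ne'
  rw [Real.logb_div hfib (pow_ne_zero _ Real.goldenRatio_ne_zero), Real.logb_pow, stmt16u]
  push_cast
  ring

lemma stmt16_gauss : ∀ n : ℕ, 2 ≤ n →
    (∑ μ ∈ Finset.Icc 2 n, (2 * μ : ℝ)) = (n : ℝ) ^ 2 + n - 2 := by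
  intro n hn
  induction n, hn using Nat.le_induction with
  | base => norm_num
  | succ n hn ih =>
    rw [Finset.sum_Icc_succ_top (by omega), ih]
    push_cast
    ring

lemma stmt16_n2 : Tendsto (fun n : ℕ => ((n : ℝ) ^ 2)) atTop atTop :=
  (tendsto_pow_atTop (two_ne_zero)).comp tendsto_natCast_atTop_atTop

lemma stmt16_aux0 : Tendsto (fun n : ℕ => (∑ μ ∈ Finset.Icc 2 n, stmt16u μ) / (n : ℝ) ^ 2)
    atTop (nhds 0) := by
  set c := Real.logb 2 (1 / Real.sqrt 5) with hc
  have hA : Tendsto (fun n : ℕ => (n : ℝ)⁻¹ • ∑ i ∈ Finset.range n, stmt16u i)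
      atTop (nhds c) := stmt16u_tendsto.cesaro
  -- (n+1)/n^2 → 0
  have h1n : Tendsto (fun n : ℕ => 1 / (n : ℝ)) atTop (nhds 0) :=
    tendsto_one_div_atTop_nhds_zero_nat
  have h1n2 : Tendsto (fun n : ℕ => 1 / (n : ℝ) ^ 2) atTop (nhds 0) :=
    tendsto_const_nhds.div_atTop stmt16_n2
  have hfrac : Tendsto (fun n : ℕ => ((n : ℝ) + 1) / (n : ℝ) ^ 2) atTop (nhds 0) := by
    have := h1n.add h1n2
    rw [add_zero] at this
    refine this.congr' ?_
    filter_upwards [eventually_ge_atTop 1] with n hn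
    have hn0 : (n : ℝ) ≠ 0 := by positivity
    field_simp
  -- first piece : (∑ range (n+1)) / n^2 → 0
  have hfirst : Tendsto (fun n : ℕ => (∑ i ∈ Finset.range (n + 1), stmt16u i) / (n : ℝ) ^ 2)
      atTop (nhds 0) := by
    have hAs : Tendsto (fun n : ℕ => ((n + 1 : ℕ) : ℝ)⁻¹ • ∑ i ∈ Finset.range (n + 1), stmt16u i)
        atTop (nhds c) := hA.comp (tendsto_add_atTop_nat 1)
    have := hAs.mul hfrac
    rw [mul_zero] at this
    refine this.congr' ?_
    filter_upwards [eventually_ge_atTop 1] with n hn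
    have hn0 : (n : ℝ) ≠ 0 := by positivity
    have hn1 : ((n : ℝ) + 1) ≠ 0 := by positivity
    push_cast
    field_simp
    rw [smul_eq_mul, ← mul_assoc, mul_one_div_cancel hn1, one_mul]
  have hsecond : Tendsto (fun n : ℕ => (∑ i ∈ Finset.range 2, stmt16u i) / (n : ℝ) ^ 2)
      atTop (nhds 0) := tendsto_const_nhds.div_atTop stmt16_n2
  have := hfirst.sub hsecond
  rw [sub_zero] at this
  refine this.congr' ?_
  filter_upwards [eventually_ge_atTop 1] with n hn
  have hIcc : Finset.Icc 2 n = Finset.Ico 2 (n + 1) := by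
    rw [Finset.Ico_add_one_right_eq_Icc]
  rw [hIcc, Finset.sum_Ico_eq_sub _ (by omega), sub_div]

/-- with `φ = (1+√5)/2` and `G(n,n) = ∏_{μ=2}^{n} F(2μ)^2` the flow count
for the `n×n` cluster state, `lim_{n→∞} log₂ G(n,n) / n² = 2 log₂ φ`. -/
theorem stmt16 (φ : ℝ) (hφ : φ = (1 + Real.sqrt 5) / 2) :
    Filter.Tendsto
      (fun n : ℕ =>
        Real.logb 2 (∏ μ ∈ Finset.Icc 2 n, ((Nat.fib (2 * μ) : ℝ)) ^ 2) / (n : ℝ) ^ 2)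
      Filter.atTop (nhds (2 * Real.logb 2 φ)) := by
  have hφg : φ = Real.goldenRatio := hφ
  subst hφg
  set L := Real.logb 2 Real.goldenRatio with hL
  -- (n²+n-2)/n² → 1
  have h1n : Tendsto (fun n : ℕ => 1 / (n : ℝ)) atTop (nhds 0) :=
    tendsto_one_div_atTop_nhds_zero_nat
  have h1n2 : Tendsto (fun n : ℕ => (2 : ℝ) / (n : ℝ) ^ 2) atTop (nhds 0) :=
    tendsto_const_nhds.div_atTop stmt16_n2
  have hratio : Tendsto (fun n : ℕ => ((n : ℝ) ^ 2 + n - 2) / (n : ℝ) ^ 2) atTop (nhds 1) := by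
    have := (tendsto_const_nhds (x := (1:ℝ)) (f := atTop)).add h1n |>.sub h1n2
    rw [add_zero, sub_zero] at this
    refine this.congr' ?_
    filter_upwards [eventually_ge_atTop 1] with n hn
    have hn0 : (n : ℝ) ≠ 0 := by positivity
    field_simp
  have hmain := (stmt16_aux0.const_mul 2).add ((hratio.const_mul (2 * L)))
  rw [mul_zero, zero_add, mul_one] at hmain
  refine hmain.congr' ?_
  filter_upwards [eventually_ge_atTop 2] with n hn
  have hfib : ∀ μ ∈ Finset.Icc 2 n, ((Nat.fib (2 * μ) : ℝ)) ^ 2 ≠ 0 := by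
    intro μ hμ
    have : 0 < Nat.fib (2 * μ) := Nat.fib_pos.mpr (by simp at hμ; omega)
    positivity
  have hsum : Real.logb 2 (∏ μ ∈ Finset.Icc 2 n, ((Nat.fib (2 * μ) : ℝ)) ^ 2)
      = 2 * (∑ μ ∈ Finset.Icc 2 n, stmt16u μ) + 2 * L * ((n : ℝ) ^ 2 + n - 2) := by
    rw [Real.logb_prod _ _ hfib, ← stmt16_gauss n hn, Finset.mul_sum, Finset.mul_sum,
      ← Finset.sum_add_distrib]
    apply Finset.sum_congr rfl
    intro μ _
    rw [Real.logb_pow]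
    simp only [stmt16u, hL]
    push_cast
    ring
  rw [hsum]
  ring
end
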